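/- Non-decrease of polynomial decay under convolution restricted to a cone: Let a, b : ℤ^d → ℂ, let Γ, Γ₁ be open cones with cl(Γ₁) ⊂ Γ ∪ {0}, and 0 < c < 1 with {y : ∃ξ∈Γ₁, |ξ−y| ≤ c|ξ|} ⊆ Γ. Suppose (1) for every N there is C_N with |a_j| ≤ C_N⟨j⟩^{−N} for j ∈ Γ ∩ ℤ^d, (2) there are D, M with |a_j| ≤ D⟨j⟩^M for all j, and (3) for every N, K_N := Σ_j ⟨j⟩^{M+N}|b_j| < ∞. Then for every N there is C′_N such that |Σ_j a_{n−j} b_j| ≤ C′_N ⟨n⟩^{−N} for all n ∈ Γ₁ ∩ ℤ^d; one may take C′_N = C_N(1−c)^{−N}Σ_j⟨j⟩^N|b_j| + D c^{−N}(1+c^{−1})^M K_N. -/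

import Mathlib

/-- The Japanese bracket `⟨x⟩ = (1+|x|²)^{1/2}` on `ℝ^d`. -/
noncomputable def jb {d : ℕ} (x : EuclideanSpace ℝ (Fin d)) : ℝ := Real.sqrt (1 + ‖x‖ ^ 2)

/-- The embedding of the lattice `ℤ^d` into `ℝ^d`. -/
noncomputable def latt {d : ℕ} (n : Fin d → ℤ) : EuclideanSpace ℝ (Fin d) :=
  WithLp.toLp 2 (fun i => (n i : ℝ))

/-- A cone in `ℝ^d`: a set closed under multiplication by positive scalars. -/
def IsCone {d : ℕ} (Γ : Set (EuclideanSpace ℝ (Fin d))) : Prop :=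
  ∀ x ∈ Γ, ∀ t : ℝ, 0 < t → t • x ∈ Γ

lemma one_le_jb {d : ℕ} (x : EuclideanSpace ℝ (Fin d)) : 1 ≤ jb x := by
  have h : (1:ℝ) = Real.sqrt 1 := by simp
  rw [h, jb]
  exact Real.sqrt_le_sqrt (by nlinarith [sq_nonneg ‖x‖])

lemma jb_pos {d : ℕ} (x : EuclideanSpace ℝ (Fin d)) : 0 < jb x :=
  lt_of_lt_of_le one_pos (one_le_jb x)

lemma latt_sub {d : ℕ} (n j : Fin d → ℤ) : latt (n - j) = latt n - latt j := by
  ext i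
  simp [latt]

/-- If `t‖y‖ ≤ ‖x‖` with `0 ≤ t ≤ 1`, then `t⟨y⟩ ≤ ⟨x⟩`. -/
lemma mul_le_jb {d : ℕ} {t : ℝ} (ht0 : 0 ≤ t) (ht1 : t ≤ 1)
    {x y : EuclideanSpace ℝ (Fin d)} (h : t * ‖y‖ ≤ ‖x‖) : t * jb y ≤ jb x := by
  have h2 : t ^ 2 * (1 + ‖y‖ ^ 2) ≤ 1 + ‖x‖ ^ 2 := by
    have := mul_le_mul h h (by positivity) (norm_nonneg x)
    nlinarith [norm_nonneg y, norm_nonneg x]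
  calc t * jb y = Real.sqrt (t ^ 2 * (1 + ‖y‖ ^ 2)) := by
        rw [Real.sqrt_mul (by positivity), Real.sqrt_sq ht0, jb]
    _ ≤ jb x := Real.sqrt_le_sqrt h2

/-- If `‖x‖ ≤ t‖y‖` with `1 ≤ t`, then `⟨x⟩ ≤ t⟨y⟩`. -/
lemma jb_le_mul {d : ℕ} {t : ℝ} (ht1 : 1 ≤ t)
    {x y : EuclideanSpace ℝ (Fin d)} (h : ‖x‖ ≤ t * ‖y‖) : jb x ≤ t * jb y := by
  have ht0 : (0:ℝ) ≤ t := le_trans zero_le_one ht1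
  have h2 : 1 + ‖x‖ ^ 2 ≤ t ^ 2 * (1 + ‖y‖ ^ 2) := by
    have := mul_le_mul h h (norm_nonneg x) (by positivity)
    nlinarith [norm_nonneg y, norm_nonneg x]
  calc jb x ≤ Real.sqrt (t ^ 2 * (1 + ‖y‖ ^ 2)) := Real.sqrt_le_sqrt h2
    _ = t * jb y := by rw [Real.sqrt_mul (by positivity), Real.sqrt_sq ht0, jb]

set_option maxHeartbeats 1000000 in
/-- Core estimate in the discrete wave front characterization: rapid decay of `a` on
`Γ ∩ ℤ^d`, a global polynomial bound on `a`, and rapid weighted summability of `b` yield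
rapid decay of the convolution `n ↦ Σ_j a_{n-j} b_j` on `Γ₁ ∩ ℤ^d`, with explicit constant
`C'_N = C_N (1-c)^{-N} Σ_j ⟨j⟩^N |b_j| + D c^{-N} (1+c⁻¹)^M Σ_j ⟨j⟩^{M+N} |b_j|`. -/
theorem stmt12 {d : ℕ} (a b : (Fin d → ℤ) → ℂ)
    (Γ Γ₁ : Set (EuclideanSpace ℝ (Fin d)))
    (hΓopen : IsOpen Γ) (hΓ₁open : IsOpen Γ₁)
    (hΓcone : IsCone Γ) (hΓ₁cone : IsCone Γ₁)
    (hcl : closure Γ₁ ⊆ Γ ∪ {0})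
    (c : ℝ) (hc0 : 0 < c) (hc1 : c < 1)
    (hnbhd : ∀ y : EuclideanSpace ℝ (Fin d), (∃ ξ ∈ Γ₁, ‖ξ - y‖ ≤ c * ‖ξ‖) → y ∈ Γ)
    (C : ℕ → ℝ)
    (ha : ∀ N : ℕ, ∀ j : Fin d → ℤ, latt j ∈ Γ → ‖a j‖ ≤ C N * jb (latt j) ^ (-(N : ℝ)))
    (D M : ℝ) (hD : 0 < D) (hM : 0 < M)
    (hapoly : ∀ j : Fin d → ℤ, ‖a j‖ ≤ D * jb (latt j) ^ M)
    (hb : ∀ N : ℕ, Summable (fun j : Fin d → ℤ => jb (latt j) ^ (M + (N : ℝ)) * ‖b j‖)) :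
    ∀ N : ℕ, ∀ n : Fin d → ℤ, latt n ∈ Γ₁ →
      ‖∑' j : Fin d → ℤ, a (n - j) * b j‖
        ≤ (C N * (1 - c) ^ (-(N : ℝ)) * (∑' j : Fin d → ℤ, jb (latt j) ^ (N : ℝ) * ‖b j‖)
            + D * c ^ (-(N : ℝ)) * (1 + c⁻¹) ^ M
              * (∑' j : Fin d → ℤ, jb (latt j) ^ (M + (N : ℝ)) * ‖b j‖))
          * jb (latt n) ^ (-(N : ℝ)) := by
  intro N n hn
  set A : ℝ := C N * (1 - c) ^ (-(N : ℝ)) with hA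
  set B : ℝ := D * c ^ (-(N : ℝ)) * (1 + c⁻¹) ^ M with hB
  set K : ℝ := jb (latt n) ^ (-(N : ℝ)) with hK
  have hKpos : 0 < K := Real.rpow_pos_of_pos (jb_pos _) _
  have hcinv : (0:ℝ) < 1 + c⁻¹ := by
    have : (0:ℝ) < c⁻¹ := by positivity
    linarith
  -- latt n ∈ Γ
  have hnΓ : latt n ∈ Γ := hnbhd _ ⟨latt n, hn, by
    simpa using mul_nonneg hc0.le (norm_nonneg (latt n))⟩
  -- C N ≥ 0
  have hCN : 0 ≤ C N := by
    have h1 := ha N n hnΓ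
    have h2 : (0:ℝ) < jb (latt n) ^ (-(N : ℝ)) := Real.rpow_pos_of_pos (jb_pos _) _
    nlinarith [norm_nonneg (a n)]
  have hApos : 0 ≤ A := mul_nonneg hCN (Real.rpow_nonneg (by linarith) _)
  have hBpos : 0 ≤ B :=
    mul_nonneg (mul_nonneg hD.le (Real.rpow_nonneg hc0.le _)) (Real.rpow_nonneg hcinv.le _)
  -- the dominating function
  set g : (Fin d → ℤ) → ℝ := fun j =>
    (A * (jb (latt j) ^ (N : ℝ) * ‖b j‖) + B * (jb (latt j) ^ (M + (N : ℝ)) * ‖b j‖)) * K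
    with hg
  -- summability of jb^N * ‖b‖
  have hsum1 : Summable (fun j : Fin d → ℤ => jb (latt j) ^ (N : ℝ) * ‖b j‖) := by
    refine (hb N).of_nonneg_of_le
      (fun j => mul_nonneg (Real.rpow_nonneg (jb_pos _).le _) (norm_nonneg _)) (fun j => ?_)
    refine mul_le_mul_of_nonneg_right ?_ (norm_nonneg _)
    exact Real.rpow_le_rpow_of_exponent_le (one_le_jb _) (by linarith)
  have hsumg : Summable g :=
    ((hsum1.mul_left A).add ((hb N).mul_left B)).mul_right K
  -- key pointwise estimate
  have key : ∀ j : Fin d → ℤ, ‖a (n - j) * b j‖ ≤ g j := by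
    intro j
    have hgj : g j = A * (jb (latt j) ^ (N : ℝ) * ‖b j‖) * K
        + B * (jb (latt j) ^ (M + (N : ℝ)) * ‖b j‖) * K := by
      simp only [hg]; ring
    rw [norm_mul, hgj]
    have hbj : (0:ℝ) ≤ ‖b j‖ := norm_nonneg _
    have hjN : (0:ℝ) ≤ jb (latt j) ^ (N : ℝ) := Real.rpow_nonneg (jb_pos _).le _
    have hjMN : (0:ℝ) ≤ jb (latt j) ^ (M + (N : ℝ)) := Real.rpow_nonneg (jb_pos _).le _
    by_cases hj : ‖latt j‖ ≤ c * ‖latt n‖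
    · -- small j : use rapid decay of a on Γ
      have hΓnj : latt (n - j) ∈ Γ := by
        refine hnbhd _ ⟨latt n, hn, ?_⟩
        rw [latt_sub]
        simpa using hj
      have hlow : (1 - c) * jb (latt n) ≤ jb (latt (n - j)) := by
        refine mul_le_jb (by linarith) (by linarith) ?_
        rw [latt_sub]
        have := norm_sub_norm_le (latt n) (latt j)
        nlinarith
      have hd : ‖a (n - j)‖ ≤ C N * ((1 - c) * jb (latt n)) ^ (-(N : ℝ)) := by
        refine le_trans (ha N (n - j) hΓnj) (mul_le_mul_of_nonneg_left ?_ hCN)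
        exact Real.rpow_le_rpow_of_nonpos (by nlinarith [jb_pos (latt n)]) hlow
          (by simp [Nat.cast_nonneg])
      have hsplit : ((1 - c) * jb (latt n)) ^ (-(N : ℝ))
          = (1 - c) ^ (-(N : ℝ)) * K := by
        rw [hK, Real.mul_rpow (by linarith) (jb_pos (latt n)).le]
      have hjb1 : (1:ℝ) ≤ jb (latt j) ^ (N : ℝ) :=
        Real.one_le_rpow (one_le_jb _) (Nat.cast_nonneg _)
      have h1 : ‖a (n - j)‖ * ‖b j‖ ≤ A * (jb (latt j) ^ (N : ℝ) * ‖b j‖) * K := by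
        calc ‖a (n - j)‖ * ‖b j‖ ≤ (C N * ((1 - c) ^ (-(N : ℝ)) * K)) * ‖b j‖ := by
              refine mul_le_mul_of_nonneg_right ?_ hbj
              rw [← hsplit]; exact hd
          _ = A * K * ‖b j‖ := by rw [hA]; ring
          _ ≤ A * K * ‖b j‖ * (jb (latt j) ^ (N : ℝ)) :=
              le_mul_of_one_le_right
                (mul_nonneg (mul_nonneg hApos hKpos.le) hbj) hjb1
          _ = A * (jb (latt j) ^ (N : ℝ) * ‖b j‖) * K := by ring
      have h2 : (0:ℝ) ≤ B * (jb (latt j) ^ (M + (N : ℝ)) * ‖b j‖) * K :=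
        mul_nonneg (mul_nonneg hBpos (mul_nonneg hjMN hbj)) hKpos.le
      linarith
    · -- large j : use polynomial bound on a
      push_neg at hj
      have hinv1 : (1:ℝ) ≤ 1 + c⁻¹ := by
        have : (0:ℝ) < c⁻¹ := by positivity
        linarith
      have hup : jb (latt (n - j)) ≤ (1 + c⁻¹) * jb (latt j) := by
        refine jb_le_mul hinv1 ?_
        rw [latt_sub]
        have h1 := norm_sub_le (latt n) (latt j)
        have h2 : ‖latt n‖ ≤ c⁻¹ * ‖latt j‖ := by
          rw [le_inv_mul_iff₀ hc0]; exact hj.le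
        nlinarith
      have hlow : c * jb (latt n) ≤ jb (latt j) :=
        mul_le_jb hc0.le hc1.le hj.le
      -- ‖a (n-j)‖ ≤ D * (1+c⁻¹)^M * jb(j)^M
      have hd : ‖a (n - j)‖ ≤ D * ((1 + c⁻¹) ^ M * jb (latt j) ^ M) := by
        refine le_trans (hapoly (n - j)) (mul_le_mul_of_nonneg_left ?_ hD.le)
        rw [← Real.mul_rpow hcinv.le (jb_pos _).le]
        exact Real.rpow_le_rpow (jb_pos _).le hup hM.le
      -- 1 ≤ c^{-N} * (jb(j)^N * K)
      have hcN : (0:ℝ) ≤ c ^ (-(N : ℝ)) := Real.rpow_nonneg hc0.le _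
      have hone : (1:ℝ) ≤ c ^ (-(N : ℝ)) * (jb (latt j) ^ (N : ℝ) * K) := by
        have h1 : c ^ (N : ℝ) * jb (latt n) ^ (N : ℝ) ≤ jb (latt j) ^ (N : ℝ) := by
          rw [← Real.mul_rpow hc0.le (jb_pos _).le]
          exact Real.rpow_le_rpow (mul_nonneg hc0.le (jb_pos _).le) hlow (Nat.cast_nonneg _)
        have h3 : jb (latt n) ^ (N : ℝ) * K = 1 := by
          rw [hK, ← Real.rpow_add (jb_pos _)]
          simp
        have h4 : c ^ (-(N : ℝ)) * c ^ (N : ℝ) = 1 := by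
          rw [← Real.rpow_add hc0]; simp
        have h5 : c ^ (N : ℝ) ≤ jb (latt j) ^ (N : ℝ) * K := by
          have := mul_le_mul_of_nonneg_right h1 hKpos.le
          rwa [mul_assoc, h3, mul_one] at this
        calc (1:ℝ) = c ^ (-(N : ℝ)) * c ^ (N : ℝ) := h4.symm
          _ ≤ _ := mul_le_mul_of_nonneg_left h5 hcN
      have hMN : jb (latt j) ^ M * jb (latt j) ^ (N : ℝ)
          = jb (latt j) ^ (M + (N : ℝ)) := (Real.rpow_add (jb_pos _) _ _).symm
      have hnn : (0:ℝ) ≤ D * ((1 + c⁻¹) ^ M * jb (latt j) ^ M) * ‖b j‖ :=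
        mul_nonneg (mul_nonneg hD.le
          (mul_nonneg (Real.rpow_nonneg hcinv.le _) (Real.rpow_nonneg (jb_pos _).le _))) hbj
      have h1 : ‖a (n - j)‖ * ‖b j‖
          ≤ B * (jb (latt j) ^ (M + (N : ℝ)) * ‖b j‖) * K := by
        calc ‖a (n - j)‖ * ‖b j‖
            ≤ D * ((1 + c⁻¹) ^ M * jb (latt j) ^ M) * ‖b j‖ :=
              mul_le_mul_of_nonneg_right hd hbj
          _ ≤ D * ((1 + c⁻¹) ^ M * jb (latt j) ^ M) * ‖b j‖
              * (c ^ (-(N : ℝ)) * (jb (latt j) ^ (N : ℝ) * K)) :=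
              le_mul_of_one_le_right hnn hone
          _ = B * ((jb (latt j) ^ M * jb (latt j) ^ (N : ℝ)) * ‖b j‖) * K := by
              rw [hB]; ring
          _ = B * (jb (latt j) ^ (M + (N : ℝ)) * ‖b j‖) * K := by rw [hMN]
      have h2 : (0:ℝ) ≤ A * (jb (latt j) ^ (N : ℝ) * ‖b j‖) * K :=
        mul_nonneg (mul_nonneg hApos (mul_nonneg hjN hbj)) hKpos.le
      linarith
  -- summability of the convolution terms
  have hsumab : Summable (fun j : Fin d → ℤ => ‖a (n - j) * b j‖) :=
    Summable.of_nonneg_of_le (fun _ => norm_nonneg _) key hsumg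
  calc ‖∑' j : Fin d → ℤ, a (n - j) * b j‖
      ≤ ∑' j : Fin d → ℤ, ‖a (n - j) * b j‖ := norm_tsum_le_tsum_norm hsumab
    _ ≤ ∑' j : Fin d → ℤ, g j := Summable.tsum_le_tsum key hsumab hsumg
    _ = (A * (∑' j : Fin d → ℤ, jb (latt j) ^ (N : ℝ) * ‖b j‖)
          + B * (∑' j : Fin d → ℤ, jb (latt j) ^ (M + (N : ℝ)) * ‖b j‖)) * K := by
        rw [hg, tsum_mul_right, Summable.tsum_add (hsum1.mul_left A) ((hb N).mul_left B),
          tsum_mul_left, tsum_mul_left]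
    _ = _ := by rw [hA, hB]
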